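/- Let O ⊆ ℝ^k be open and convex, let C : O → ℝ be twice continuously differentiable, fix λ > 1 and a set of directions V ⊆ ℝ^k, and assume that for every v ∈ V the map η ↦ ⟨v, (∇²C(η))·v⟩ is convex on O. For b ∈ ℝ^k define e_b(η) = (C(η + (1−λ)·b) − λ·C(η))/(λ−1) + C(η + b) on O_b = {η : η ∈ O, η + b ∈ O, η + (1−λ)·b ∈ O}. Then: (i) for every b ∈ ℝ^k, every v ∈ V, and every η ∈ O_b, the second directional derivative satisfies ⟨v, (∇²e_b(η))·v⟩ ≥ 0, so e_b is convex along every line with direction in V; and (ii) for any set of offsets Bset ⊆ ℝ^k, the function f(η) = sup_{b ∈ Bset} e_b(η) is convex on every segment with direction in V that is contained in ∩_{b ∈ Bset} O_b. -/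

import Mathlib

/-!
STATEMENT 2: Let `O ⊆ ℝ^k` be open and convex, `C : O → ℝ` twice continuously
differentiable, `λ > 1`, and `V ⊆ ℝ^k` a set of directions such that for every `v ∈ V`
the map `η ↦ ⟨v, (∇²C(η))v⟩` is convex on `O`.  For `b ∈ ℝ^k` define
`e_b(η) = (C(η + (1−λ)b) − λC(η))/(λ−1) + C(η + b)` on
`O_b = {η ∈ O : η + b ∈ O, η + (1−λ)b ∈ O}`.  Then:
(i) `⟨v, (∇²e_b(η))v⟩ ≥ 0` for all `b`, `v ∈ V`, `η ∈ O_b`, so `e_b` is convex along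
every line with direction in `V`; and
(ii) for any set of offsets `Bset`, the function `f(η) = sup_{b ∈ Bset} e_b(η)` is
convex on every segment with direction in `V` contained in `∩_{b ∈ Bset} O_b`.
-/

open MeasureTheory

variable {k : ℕ}

/-- `e_b(η) = (C(η + (1−λ)·b) − λ·C(η))/(λ−1) + C(η + b)`. -/
noncomputable def renyiObjective (C : EuclideanSpace ℝ (Fin k) → ℝ) (l : ℝ)
    (b η : EuclideanSpace ℝ (Fin k)) : ℝ :=
  (C (η + (1 - l) • b) - l * C η) / (l - 1) + C (η + b)

/-- The domain `O_b = {η : η ∈ O, η + b ∈ O, η + (1−λ)·b ∈ O}`. -/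
def renyiDomain (O : Set (EuclideanSpace ℝ (Fin k))) (l : ℝ)
    (b : EuclideanSpace ℝ (Fin k)) : Set (EuclideanSpace ℝ (Fin k)) :=
  {η | η ∈ O ∧ η + b ∈ O ∧ η + (1 - l) • b ∈ O}

section AuxLemmas


section Aux
variable {E : Type*} [NormedAddCommGroup E] [NormedSpace ℝ E]

lemma aux_line (x v : E) (t : ℝ) : HasDerivAt (fun s : ℝ => x + s • v) v t := by
  simpa using ((hasDerivAt_id t).smul_const v).const_add x

lemma aux_slice1 {f : E → ℝ} {x v : E} {t : ℝ} (hf : DifferentiableAt ℝ f (x + t • v)) :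
    HasDerivAt (fun s : ℝ => f (x + s • v)) (fderiv ℝ f (x + t • v) v) t :=
  hf.hasFDerivAt.comp_hasDerivAt t (aux_line x v t)

lemma aux_slice2 {f : E → ℝ} {x v : E} {t : ℝ} (hf : ContDiffAt ℝ 2 f (x + t • v)) :
    HasDerivAt (fun s : ℝ => fderiv ℝ f (x + s • v) v)
      (iteratedFDeriv ℝ 2 f (x + t • v) ![v, v]) t := by
  have h1 : ContDiffAt ℝ 1 (fderiv ℝ f) (x + t • v) := hf.fderiv_right (by norm_num)
  have hd : DifferentiableAt ℝ (fderiv ℝ f) (x + t • v) := h1.differentiableAt (by norm_num)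
  have hF : DifferentiableAt ℝ (fun y => fderiv ℝ f y v) (x + t • v) :=
    hd.clm_apply (differentiableAt_const v)
  have h2 := hF.hasFDerivAt.comp_hasDerivAt t (aux_line x v t)
  have h3 : fderiv ℝ (fun y => fderiv ℝ f y v) (x + t • v) v
      = fderiv ℝ (fderiv ℝ f) (x + t • v) v v := by
    rw [fderiv_clm_apply hd (differentiableAt_const v)]
    simp
  rw [iteratedFDeriv_two_apply]
  simp only [Matrix.cons_val_zero, Matrix.cons_val_one, Matrix.head_cons]
  rw [← h3]
  exact h2

lemma aux_sq_smul (f : ContinuousMultilinearMap ℝ (fun _ : Fin 2 => E) ℝ) (c : ℝ) (v : E) :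
    f ![c • v, c • v] = (c * c) * f ![v, v] := by
  have h : ![c • v, c • v] = fun i => c • (![v, v] i) := by
    funext i; fin_cases i <;> simp
  rw [h, f.map_smul_univ]
  rw [Fin.prod_univ_two, smul_eq_mul]

end Aux


section Aux
variable {E : Type*} [NormedAddCommGroup E] [NormedSpace ℝ E]

lemma aux_comb_nonneg (O : Set E) (hO : IsOpen O) (C : E → ℝ) (l : ℝ) (hl : 1 < l)
    (v : E) (hv : ConvexOn ℝ O fun η => iteratedFDerivWithin ℝ 2 C O η ![v, v])
    {b x : E} (h0 : x ∈ O) (h1 : x + b ∈ O) (h2 : x + (1 - l) • b ∈ O) :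
    0 ≤ (iteratedFDeriv ℝ 2 C (x + (1 - l) • b) ![v, v]
          - l * iteratedFDeriv ℝ 2 C x ![v, v]) / (l - 1)
        + iteratedFDeriv ℝ 2 C (x + b) ![v, v] := by
  have hl0 : (0:ℝ) < l := lt_trans one_pos hl
  have hl1 : (0:ℝ) < l - 1 := by linarith
  have hln : l ≠ 0 := ne_of_gt hl0
  have hw : 1/l + (l-1)/l = 1 := by field_simp; ring
  have hcomb : (1/l) • (x + (1 - l) • b) + ((l-1)/l) • (x + b)
      = (1/l + (l-1)/l) • x + ((1/l) * (1-l) + (l-1)/l) • b := by module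
  have hb0 : (1/l) * (1-l) + (l-1)/l = 0 := by field_simp; ring
  have hkey := hv.2 h2 h1 (by positivity) (by positivity : (0:ℝ) ≤ (l-1)/l) hw
  simp only at hkey
  rw [hcomb, hw, hb0, one_smul, zero_smul, add_zero] at hkey
  rw [iteratedFDerivWithin_of_isOpen (f := C) 2 hO h0,
      iteratedFDerivWithin_of_isOpen (f := C) 2 hO h1,
      iteratedFDerivWithin_of_isOpen (f := C) 2 hO h2] at hkey
  set A := iteratedFDeriv ℝ 2 C (x + (1 - l) • b) ![v, v] with hA
  set X := iteratedFDeriv ℝ 2 C x ![v, v] with hX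
  set Cc := iteratedFDeriv ℝ 2 C (x + b) ![v, v] with hCc
  have h5 : l * X ≤ l * (1/l * A + (l-1)/l * Cc) := by
    exact mul_le_mul_of_nonneg_left hkey hl0.le
  have h6 : l * (1/l * A + (l-1)/l * Cc) = A + (l-1) * Cc := by field_simp
  have heq : (A - l * X) / (l - 1) + Cc = (A - l * X + (l-1) * Cc) / (l-1) := by
    field_simp
  rw [heq]
  apply div_nonneg _ hl1.le
  linarith [h5, h6]

end Aux

lemma aux_domain_open (O : Set (EuclideanSpace ℝ (Fin k))) (hO : IsOpen O) (l : ℝ)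
    (b : EuclideanSpace ℝ (Fin k)) : IsOpen (renyiDomain O l b) := by
  have h1 : renyiDomain O l b = O ∩ ((fun η : EuclideanSpace ℝ (Fin k) => η + b) ⁻¹' O)
      ∩ ((fun η : EuclideanSpace ℝ (Fin k) => η + (1 - l) • b) ⁻¹' O) := by
    ext η
    simp only [renyiDomain, Set.mem_setOf_eq, Set.mem_inter_iff, Set.mem_preimage]
    tauto
  rw [h1]
  exact (hO.inter (hO.preimage (continuous_id.add continuous_const))).inter
    (hO.preimage (continuous_id.add continuous_const))

lemma aux_eb_contDiffAt (O : Set (EuclideanSpace ℝ (Fin k))) (hO : IsOpen O)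
    (C : EuclideanSpace ℝ (Fin k) → ℝ) (hC : ContDiffOn ℝ 2 C O) (l : ℝ)
    (b : EuclideanSpace ℝ (Fin k)) {x : EuclideanSpace ℝ (Fin k)}
    (hx : x ∈ renyiDomain O l b) : ContDiffAt ℝ 2 (renyiObjective C l b) x := by
  obtain ⟨h0, h1, h2⟩ := hx
  have hC0 : ContDiffAt ℝ 2 C x := hC.contDiffAt (hO.mem_nhds h0)
  have hC1 : ContDiffAt ℝ 2 C (x + b) := hC.contDiffAt (hO.mem_nhds h1)
  have hC2 : ContDiffAt ℝ 2 C (x + (1 - l) • b) := hC.contDiffAt (hO.mem_nhds h2)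
  have ht1 : ContDiffAt ℝ 2 (fun η : EuclideanSpace ℝ (Fin k) => η + b) x :=
    (contDiff_id.add contDiff_const).contDiffAt
  have ht2 : ContDiffAt ℝ 2 (fun η : EuclideanSpace ℝ (Fin k) => η + (1 - l) • b) x :=
    (contDiff_id.add contDiff_const).contDiffAt
  exact (((hC2.comp x ht2).sub (contDiffAt_const.mul hC0)).div_const (l - 1)).add
    (hC1.comp x ht1)

lemma aux_g_deriv1 (O : Set (EuclideanSpace ℝ (Fin k))) (hO : IsOpen O)
    (C : EuclideanSpace ℝ (Fin k) → ℝ) (hC : ContDiffOn ℝ 2 C O) (l : ℝ)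
    (b x v : EuclideanSpace ℝ (Fin k)) {s : ℝ}
    (hs : x + s • v ∈ renyiDomain O l b) :
    HasDerivAt (fun s : ℝ => renyiObjective C l b (x + s • v))
      ((fderiv ℝ C ((x + (1 - l) • b) + s • v) v - l * fderiv ℝ C (x + s • v) v) / (l - 1)
        + fderiv ℝ C ((x + b) + s • v) v) s := by
  obtain ⟨h0, h1, h2⟩ := hs
  rw [add_right_comm x (s • v) b] at h1
  rw [add_right_comm x (s • v) ((1 - l) • b)] at h2
  have d0 : DifferentiableAt ℝ C (x + s • v) :=
    (hC.contDiffAt (hO.mem_nhds h0)).differentiableAt (by norm_num)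
  have d1 : DifferentiableAt ℝ C ((x + b) + s • v) :=
    (hC.contDiffAt (hO.mem_nhds h1)).differentiableAt (by norm_num)
  have d2 : DifferentiableAt ℝ C ((x + (1 - l) • b) + s • v) :=
    (hC.contDiffAt (hO.mem_nhds h2)).differentiableAt (by norm_num)
  have H0 := aux_slice1 d0
  have H1 := aux_slice1 d1
  have H2 := aux_slice1 d2
  have hcomb := ((H2.sub (H0.const_mul l)).div_const (l - 1)).add H1
  have hfun : (fun s : ℝ => renyiObjective C l b (x + s • v))
      = fun s : ℝ => (C ((x + (1 - l) • b) + s • v) - l * C (x + s • v)) / (l - 1)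
          + C ((x + b) + s • v) := by
    funext u
    rw [renyiObjective, add_right_comm x (u • v) b, add_right_comm x (u • v) ((1 - l) • b)]
  rw [hfun]
  exact hcomb

lemma aux_g_deriv2 (O : Set (EuclideanSpace ℝ (Fin k))) (hO : IsOpen O)
    (C : EuclideanSpace ℝ (Fin k) → ℝ) (hC : ContDiffOn ℝ 2 C O) (l : ℝ)
    (b x v : EuclideanSpace ℝ (Fin k)) {s : ℝ}
    (hs : x + s • v ∈ renyiDomain O l b) :
    HasDerivAt (fun s : ℝ =>
        (fderiv ℝ C ((x + (1 - l) • b) + s • v) v - l * fderiv ℝ C (x + s • v) v) / (l - 1)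
          + fderiv ℝ C ((x + b) + s • v) v)
      ((iteratedFDeriv ℝ 2 C ((x + (1 - l) • b) + s • v) ![v, v]
          - l * iteratedFDeriv ℝ 2 C (x + s • v) ![v, v]) / (l - 1)
        + iteratedFDeriv ℝ 2 C ((x + b) + s • v) ![v, v]) s := by
  obtain ⟨h0, h1, h2⟩ := hs
  rw [add_right_comm x (s • v) b] at h1
  rw [add_right_comm x (s • v) ((1 - l) • b)] at h2
  have d0 : ContDiffAt ℝ 2 C (x + s • v) := hC.contDiffAt (hO.mem_nhds h0)
  have d1 : ContDiffAt ℝ 2 C ((x + b) + s • v) := hC.contDiffAt (hO.mem_nhds h1)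
  have d2 : ContDiffAt ℝ 2 C ((x + (1 - l) • b) + s • v) := hC.contDiffAt (hO.mem_nhds h2)
  exact (((aux_slice2 d2).sub ((aux_slice2 d0).const_mul l)).div_const (l - 1)).add
    (aux_slice2 d1)

lemma aux_itfd_eq (O : Set (EuclideanSpace ℝ (Fin k))) (hO : IsOpen O)
    (C : EuclideanSpace ℝ (Fin k) → ℝ) (hC : ContDiffOn ℝ 2 C O) (l : ℝ)
    (b v : EuclideanSpace ℝ (Fin k)) {x : EuclideanSpace ℝ (Fin k)}
    (hx : x ∈ renyiDomain O l b) :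
    iteratedFDeriv ℝ 2 (renyiObjective C l b) x ![v, v]
      = (iteratedFDeriv ℝ 2 C (x + (1 - l) • b) ![v, v]
          - l * iteratedFDeriv ℝ 2 C x ![v, v]) / (l - 1)
        + iteratedFDeriv ℝ 2 C (x + b) ![v, v] := by
  have hSo : IsOpen (renyiDomain O l b) := aux_domain_open O hO l b
  set U : Set ℝ := {s : ℝ | x + s • v ∈ renyiDomain O l b} with hU
  have hUo : IsOpen U := hSo.preimage (by continuity)
  have h0U : (0 : ℝ) ∈ U := by simp [hU, hx]
  -- φ : the first-derivative combination
  set φ : ℝ → ℝ := fun s =>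
      (fderiv ℝ C ((x + (1 - l) • b) + s • v) v - l * fderiv ℝ C (x + s • v) v) / (l - 1)
        + fderiv ℝ C ((x + b) + s • v) v with hφ
  -- ψ : the slice derivative of e_b
  set ψ : ℝ → ℝ := fun s => fderiv ℝ (renyiObjective C l b) (x + s • v) v with hψ
  have hψφ : ∀ s ∈ U, ψ s = φ s := by
    intro s hs
    have hdEb : DifferentiableAt ℝ (renyiObjective C l b) (x + s • v) :=
      (aux_eb_contDiffAt O hO C hC l b hs).differentiableAt (by norm_num)
    have e1 := (aux_slice1 hdEb).deriv
    have e2 := (aux_g_deriv1 O hO C hC l b x v hs).deriv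
    simpa using e1.symm.trans e2
  have hEb0 : ContDiffAt ℝ 2 (renyiObjective C l b) (x + (0 : ℝ) • v) := by
    rw [zero_smul, add_zero]; exact aux_eb_contDiffAt O hO C hC l b hx
  have hB := aux_slice2 hEb0
  have hx0 : x + (0 : ℝ) • v ∈ renyiDomain O l b := by rw [zero_smul, add_zero]; exact hx
  have hA := aux_g_deriv2 O hO C hC l b x v hx0
  have hmem : U ∈ nhds (0 : ℝ) := hUo.mem_nhds h0U
  have heq : φ =ᶠ[nhds (0 : ℝ)] ψ :=
    Filter.eventuallyEq_of_mem hmem (fun s hs => (hψφ s hs).symm)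
  have hB' : HasDerivAt φ (iteratedFDeriv ℝ 2 (renyiObjective C l b)
      (x + (0 : ℝ) • v) ![v, v]) 0 := hB.congr_of_eventuallyEq heq
  have := hB'.unique hA
  simp only [zero_smul, add_zero] at this
  exact this

lemma aux_convexOn (O : Set (EuclideanSpace ℝ (Fin k))) (hO : IsOpen O)
    (C : EuclideanSpace ℝ (Fin k) → ℝ) (hC : ContDiffOn ℝ 2 C O) (l : ℝ) (hl : 1 < l)
    (v : EuclideanSpace ℝ (Fin k))
    (hv : ConvexOn ℝ O fun η => iteratedFDerivWithin ℝ 2 C O η ![v, v])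
    (b η₁ η₂ : EuclideanSpace ℝ (Fin k)) (c : ℝ) (hdir : η₂ - η₁ = c • v)
    (hseg : segment ℝ η₁ η₂ ⊆ renyiDomain O l b) :
    ConvexOn ℝ (segment ℝ η₁ η₂) (renyiObjective C l b) := by
  set w : EuclideanSpace ℝ (Fin k) := η₂ - η₁ with hw
  set g : ℝ → ℝ := fun s => renyiObjective C l b (η₁ + s • w) with hg
  have hmem : ∀ s ∈ Set.Icc (0:ℝ) 1, η₁ + s • w ∈ renyiDomain O l b := by
    intro s hs
    apply hseg
    rw [segment_eq_image']
    exact ⟨s, hs, rfl⟩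
  have hcombo : ∀ y ∈ renyiDomain O l b,
      0 ≤ (iteratedFDeriv ℝ 2 C (y + (1 - l) • b) ![w, w]
            - l * iteratedFDeriv ℝ 2 C y ![w, w]) / (l - 1)
          + iteratedFDeriv ℝ 2 C (y + b) ![w, w] := by
    intro y hy
    obtain ⟨h0, h1, h2⟩ := hy
    have h := aux_comb_nonneg O hO C l hl v hv h0 h1 h2
    have hrw : ∀ z : EuclideanSpace ℝ (Fin k),
        iteratedFDeriv ℝ 2 C z ![w, w] = (c * c) * iteratedFDeriv ℝ 2 C z ![v, v] := by
      intro z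
      rw [hdir]
      exact aux_sq_smul _ c v
    rw [hrw, hrw, hrw]
    have : (c * c * iteratedFDeriv ℝ 2 C (y + (1 - l) • b) ![v, v]
        - l * (c * c * iteratedFDeriv ℝ 2 C y ![v, v])) / (l - 1)
        + c * c * iteratedFDeriv ℝ 2 C (y + b) ![v, v]
        = (c * c) * ((iteratedFDeriv ℝ 2 C (y + (1 - l) • b) ![v, v]
            - l * iteratedFDeriv ℝ 2 C y ![v, v]) / (l - 1)
          + iteratedFDeriv ℝ 2 C (y + b) ![v, v]) := by ring
    rw [this]
    exact mul_nonneg (mul_self_nonneg c) h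
  have hUo : IsOpen {s : ℝ | η₁ + s • w ∈ renyiDomain O l b} :=
    (aux_domain_open O hO l b).preimage (by continuity)
  have hderiv_eq : ∀ u ∈ {s : ℝ | η₁ + s • w ∈ renyiDomain O l b},
      deriv g u = (fderiv ℝ C ((η₁ + (1 - l) • b) + u • w) w
          - l * fderiv ℝ C (η₁ + u • w) w) / (l - 1)
        + fderiv ℝ C ((η₁ + b) + u • w) w := by
    intro u hu
    exact (aux_g_deriv1 O hO C hC l b η₁ w hu).deriv
  have hD2 : ∀ s ∈ Set.Icc (0:ℝ) 1, HasDerivAt (deriv g)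
      ((iteratedFDeriv ℝ 2 C ((η₁ + (1 - l) • b) + s • w) ![w, w]
          - l * iteratedFDeriv ℝ 2 C (η₁ + s • w) ![w, w]) / (l - 1)
        + iteratedFDeriv ℝ 2 C ((η₁ + b) + s • w) ![w, w]) s := by
    intro s hs
    have hsU : s ∈ {s : ℝ | η₁ + s • w ∈ renyiDomain O l b} := hmem s hs
    have hevt : deriv g =ᶠ[nhds s] fun u =>
        (fderiv ℝ C ((η₁ + (1 - l) • b) + u • w) w
            - l * fderiv ℝ C (η₁ + u • w) w) / (l - 1)
          + fderiv ℝ C ((η₁ + b) + u • w) w :=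
      Filter.eventuallyEq_of_mem (hUo.mem_nhds hsU) hderiv_eq
    exact (aux_g_deriv2 O hO C hC l b η₁ w hsU).congr_of_eventuallyEq hevt
  have hgconv : ConvexOn ℝ (Set.Icc (0:ℝ) 1) g := by
    apply convexOn_of_deriv2_nonneg (convex_Icc 0 1)
    · intro s hs
      exact (aux_g_deriv1 O hO C hC l b η₁ w (hmem s hs)).continuousAt.continuousWithinAt
    · intro s hs
      exact (aux_g_deriv1 O hO C hC l b η₁ w
        (hmem s (interior_subset hs))).differentiableAt.differentiableWithinAt
    · intro s hs
      exact (hD2 s (interior_subset hs)).differentiableAt.differentiableWithinAt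
    · intro s hs
      have h2 := (hD2 s (interior_subset hs)).deriv
      have hmem' := hmem s (interior_subset hs)
      have hnn := hcombo _ hmem'
      have hrw1 : η₁ + s • w + (1 - l) • b = (η₁ + (1 - l) • b) + s • w := by
        rw [add_right_comm]
      have hrw2 : η₁ + s • w + b = (η₁ + b) + s • w := by rw [add_right_comm]
      rw [hrw1, hrw2] at hnn
      show 0 ≤ deriv (deriv g) s
      rw [h2]
      exact hnn
  refine ⟨convex_segment η₁ η₂, ?_⟩
  intro p hp q hq a a' ha ha' haa
  rw [segment_eq_image'] at hp hq
  obtain ⟨σ, hσ, rfl⟩ := hp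
  obtain ⟨τ, hτ, rfl⟩ := hq
  have hpt : a • (η₁ + σ • w) + a' • (η₁ + τ • w) = η₁ + (a * σ + a' * τ) • w := by
    have hb'' : a' = 1 - a := by linarith
    subst hb''
    module
  have hineq := hgconv.2 hσ hτ ha ha' haa
  rw [hpt]
  simpa [hg, smul_eq_mul] using hineq

end AuxLemmas

theorem renyi_objective_convexity
    (O : Set (EuclideanSpace ℝ (Fin k))) (hO : IsOpen O) (hOconv : Convex ℝ O)
    (C : EuclideanSpace ℝ (Fin k) → ℝ) (hC : ContDiffOn ℝ 2 C O)
    (l : ℝ) (hl : 1 < l) (V : Set (EuclideanSpace ℝ (Fin k)))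
    (hV : ∀ v ∈ V,
      ConvexOn ℝ O (fun η => iteratedFDerivWithin ℝ 2 C O η ![v, v])) :
    -- (i) nonnegativity of the second directional derivative of `e_b` ...
    (∀ b : EuclideanSpace ℝ (Fin k), ∀ v ∈ V, ∀ η ∈ renyiDomain O l b,
      0 ≤ iteratedFDerivWithin ℝ 2 (renyiObjective C l b) (renyiDomain O l b) η ![v, v]) ∧
    (∀ b : EuclideanSpace ℝ (Fin k), ∀ v ∈ V, ∀ η₁ η₂ : EuclideanSpace ℝ (Fin k),
      (∃ c : ℝ, η₂ - η₁ = c • v) → segment ℝ η₁ η₂ ⊆ renyiDomain O l b →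
      ConvexOn ℝ (segment ℝ η₁ η₂) (renyiObjective C l b)) ∧
    -- (ii) `f(η) = sup_{b ∈ Bset} e_b(η)` is convex on every segment with direction
    -- in `V` contained in `∩_{b ∈ Bset} O_b`:
    (∀ Bset : Set (EuclideanSpace ℝ (Fin k)), ∀ η₁ η₂ : EuclideanSpace ℝ (Fin k),
      (∃ v ∈ V, ∃ c : ℝ, η₂ - η₁ = c • v) →
      segment ℝ η₁ η₂ ⊆ (⋂ b ∈ Bset, renyiDomain O l b) →
      ∀ s t : ℝ, 0 ≤ s → 0 ≤ t → s + t = 1 →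
        (⨆ b ∈ Bset, ((renyiObjective C l b (s • η₁ + t • η₂) : ℝ) : EReal)) ≤
          (s : EReal) * (⨆ b ∈ Bset, ((renyiObjective C l b η₁ : ℝ) : EReal))
            + (t : EReal) * (⨆ b ∈ Bset, ((renyiObjective C l b η₂ : ℝ) : EReal))) := by
  refine ⟨?_, ?_, ?_⟩
  · intro b v hvV η hη
    rw [iteratedFDerivWithin_of_isOpen (f := renyiObjective C l b) 2
      (aux_domain_open O hO l b) hη]
    rw [aux_itfd_eq O hO C hC l b v hη]
    obtain ⟨h0, h1, h2⟩ := hη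
    exact aux_comb_nonneg O hO C l hl v (hV v hvV) h0 h1 h2
  · rintro b v hvV η₁ η₂ ⟨c, hdir⟩ hseg
    exact aux_convexOn O hO C hC l hl v (hV v hvV) b η₁ η₂ c hdir hseg
  · rintro Bset η₁ η₂ ⟨v, hvV, c, hdir⟩ hsub s t hs ht hst
    apply iSup₂_le
    intro b hb
    have hsegb : segment ℝ η₁ η₂ ⊆ renyiDomain O l b := by
      intro z hz
      have := hsub hz
      simp only [Set.mem_iInter] at this
      exact this b hb
    have hconv := aux_convexOn O hO C hC l hl v (hV v hvV) b η₁ η₂ c hdir hsegb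
    have hle : renyiObjective C l b (s • η₁ + t • η₂)
        ≤ s * renyiObjective C l b η₁ + t * renyiObjective C l b η₂ := by
      simpa [smul_eq_mul] using
        hconv.2 (left_mem_segment ℝ η₁ η₂) (right_mem_segment ℝ η₁ η₂) hs ht hst
    calc ((renyiObjective C l b (s • η₁ + t • η₂) : ℝ) : EReal)
        ≤ ((s * renyiObjective C l b η₁ + t * renyiObjective C l b η₂ : ℝ) : EReal) := by
          exact_mod_cast hle
      _ = (s : EReal) * ((renyiObjective C l b η₁ : ℝ) : EReal)
            + (t : EReal) * ((renyiObjective C l b η₂ : ℝ) : EReal) := by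
          push_cast; rfl
      _ ≤ (s : EReal) * (⨆ b ∈ Bset, ((renyiObjective C l b η₁ : ℝ) : EReal))
            + (t : EReal) * (⨆ b ∈ Bset, ((renyiObjective C l b η₂ : ℝ) : EReal)) := by
          apply add_le_add
          · exact mul_le_mul_of_nonneg_left
              (le_iSup₂ (f := fun b (_ : b ∈ Bset) => ((renyiObjective C l b η₁ : ℝ) : EReal)) b hb)
              (EReal.coe_nonneg.2 hs)
          · exact mul_le_mul_of_nonneg_left
              (le_iSup₂ (f := fun b (_ : b ∈ Bset) => ((renyiObjective C l b η₂ : ℝ) : EReal)) b hb)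
              (EReal.coe_nonneg.2 ht)
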